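/- Let d ≥ 1, let Λ be a finite nonempty type, and let (F, G) be a dual frame pair of families Λ → Matrix (Fin d) (Fin d) ℂ. For matrices U, V and any pair of families (F', G') set N_V^{(F,G)|(F',G')} := max_{λ} Σ_{λ'} |Tr(F(λ') * V * G'(λ) * Vᴴ)| and N_U^{(F',G')|(F,G)} := max_{λ} Σ_{λ'} |Tr(F'(λ') * U * G(λ) * Uᴴ)|, and let N_{VU} := max_{λ} Σ_{λ'} |Tr(F(λ') * (V*U) * G(λ) * (V*U)ᴴ)|. Let S ⊆ ℝ be the set of products N_V^{(F,G)|(F',G')} · N_U^{(F',G')|(F,G)} as (F', G') ranges over all dual frame pairs indexed by Λ. Then N_V^{(F,G)|(F,G)} · N_U^{(F,G)|(F,G)} ≥ sInf S and sInf S ≥ N_{VU}. -/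

import Mathlib

open Matrix

/-- A dual frame pair: families `F G : Λ → Matrix (Fin d) (Fin d) ℂ` such that
every matrix `O` satisfies `O = Σ_λ Tr(F(λ) * O) • G(λ)`. -/
def IsDualFramePair {d : ℕ} {Λ : Type*} [Fintype Λ]
    (F G : Λ → Matrix (Fin d) (Fin d) ℂ) : Prop :=
  ∀ O : Matrix (Fin d) (Fin d) ℂ, O = ∑ lam : Λ, (F lam * O).trace • G lam

/-- The negativity of a gate `U` with output frame operators `Fout` and input
dual frame operators `Gin`:
`max_λ Σ_λ' |Tr(Fout(λ') * U * Gin(λ) * Uᴴ)|`. -/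
noncomputable def gateNegativity {d : ℕ} {Λ : Type*} [Fintype Λ] [Nonempty Λ]
    (Fout Gin : Λ → Matrix (Fin d) (Fin d) ℂ) (U : Matrix (Fin d) (Fin d) ℂ) : ℝ :=
  Finset.univ.sup' Finset.univ_nonempty fun lam : Λ =>
    ∑ lam' : Λ, ‖(Fout lam' * U * Gin lam * Uᴴ).trace‖

lemma gateNeg_nonneg {d : ℕ} {Λ : Type*} [Fintype Λ] [Nonempty Λ]
    (Fout Gin : Λ → Matrix (Fin d) (Fin d) ℂ) (U : Matrix (Fin d) (Fin d) ℂ) :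
    0 ≤ gateNegativity Fout Gin U := by
  obtain ⟨μ⟩ := (inferInstance : Nonempty Λ)
  refine le_trans ?_ (Finset.le_sup' _ (Finset.mem_univ μ))
  positivity

lemma key {d : ℕ} {Λ : Type*} [Fintype Λ] [Nonempty Λ]
    (F G F' G' : Λ → Matrix (Fin d) (Fin d) ℂ)
    (hdual' : IsDualFramePair F' G')
    (U V : Matrix (Fin d) (Fin d) ℂ) :
    gateNegativity F G (V * U) ≤ gateNegativity F G' V * gateNegativity F' G U := by
  have hNV := gateNeg_nonneg F G' V
  conv_lhs => rw [gateNegativity]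
  apply Finset.sup'_le
  intro lam _
  have hexp : ∀ lam'' : Λ,
      (F lam'' * (V * U) * G lam * (V * U)ᴴ).trace =
      ∑ μ : Λ, (F' μ * (U * G lam * Uᴴ)).trace * (F lam'' * V * G' μ * Vᴴ).trace := by
    intro lam''
    have h1 : F lam'' * (V * U) * G lam * (V * U)ᴴ
        = F lam'' * V * (U * G lam * Uᴴ) * Vᴴ := by
      rw [conjTranspose_mul]
      noncomm_ring
    rw [h1]
    conv_lhs => rw [hdual' (U * G lam * Uᴴ)]
    rw [Finset.mul_sum, Finset.sum_mul, trace_sum]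
    congr 1; ext μ
    rw [Matrix.mul_smul, Matrix.smul_mul, trace_smul]
    simp [smul_eq_mul]
  calc ∑ lam'' : Λ, ‖(F lam'' * (V * U) * G lam * (V * U)ᴴ).trace‖
      ≤ ∑ lam'' : Λ, ∑ μ : Λ, ‖(F' μ * (U * G lam * Uᴴ)).trace‖
          * ‖(F lam'' * V * G' μ * Vᴴ).trace‖ := by
        apply Finset.sum_le_sum
        intro lam'' _
        rw [hexp lam'']
        refine le_trans (norm_sum_le _ _) ?_
        apply le_of_eq
        congr 1; ext μ; exact norm_mul _ _
    _ = ∑ μ : Λ, ‖(F' μ * (U * G lam * Uᴴ)).trace‖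
          * ∑ lam'' : Λ, ‖(F lam'' * V * G' μ * Vᴴ).trace‖ := by
        rw [Finset.sum_comm]
        congr 1; ext μ; rw [Finset.mul_sum]
    _ ≤ ∑ μ : Λ, ‖(F' μ * (U * G lam * Uᴴ)).trace‖ * gateNegativity F G' V := by
        apply Finset.sum_le_sum
        intro μ _
        have : ∑ lam'' : Λ, ‖(F lam'' * V * G' μ * Vᴴ).trace‖
            ≤ gateNegativity F G' V := by
          rw [gateNegativity]
          exact Finset.le_sup' (fun ν : Λ => ∑ lam'' : Λ,
            ‖(F lam'' * V * G' ν * Vᴴ).trace‖) (Finset.mem_univ μ)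
        exact mul_le_mul_of_nonneg_left this (by positivity)
    _ = (∑ μ : Λ, ‖(F' μ * U * G lam * Uᴴ).trace‖) * gateNegativity F G' V := by
        rw [Finset.sum_mul]; congr 1; ext μ; congr 2; simp [Matrix.mul_assoc]
    _ ≤ gateNegativity F' G U * gateNegativity F G' V := by
        refine mul_le_mul_of_nonneg_right ?_ hNV
        rw [gateNegativity]
        exact Finset.le_sup' (fun ν : Λ => ∑ μ : Λ,
          ‖(F' μ * U * G ν * Uᴴ).trace‖) (Finset.mem_univ lam)
    _ = gateNegativity F G' V * gateNegativity F' G U := mul_comm _ _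

/-- Theorem 1 of the paper: for two consecutive gates `U` and `V` with a dual
frame pair `(F, G)` on the outer wires,
`N_V^{G|G} N_U^{G|G} ≥ min_{G'} N_V^{G|G'} N_U^{G'|G} ≥ N_{VU}^{G|G}`,
where the minimum (infimum) ranges over all dual frame pairs `(F', G')`
assigned to the intermediate wire. -/
theorem frame_optimisation_bounds
    {d : ℕ} (hd : 1 ≤ d) {Λ : Type*} [Fintype Λ] [Nonempty Λ]
    (F G : Λ → Matrix (Fin d) (Fin d) ℂ)
    (hdual : IsDualFramePair F G)
    (U V : Matrix (Fin d) (Fin d) ℂ)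
    (S : Set ℝ)
    (hS : S = {x : ℝ | ∃ F' G' : Λ → Matrix (Fin d) (Fin d) ℂ,
      IsDualFramePair F' G' ∧
      x = gateNegativity F G' V * gateNegativity F' G U}) :
    gateNegativity F G V * gateNegativity F G U ≥ sInf S ∧
      sInf S ≥ gateNegativity F G (V * U) := by
  subst hS
  have hmem : gateNegativity F G V * gateNegativity F G U ∈
      {x : ℝ | ∃ F' G' : Λ → Matrix (Fin d) (Fin d) ℂ,
        IsDualFramePair F' G' ∧
        x = gateNegativity F G' V * gateNegativity F' G U} := ⟨F, G, hdual, rfl⟩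
  have hlb : ∀ x ∈ {x : ℝ | ∃ F' G' : Λ → Matrix (Fin d) (Fin d) ℂ,
      IsDualFramePair F' G' ∧
      x = gateNegativity F G' V * gateNegativity F' G U},
      gateNegativity F G (V * U) ≤ x := by
    rintro x ⟨F', G', hd', rfl⟩
    exact key F G F' G' hd' U V
  exact ⟨csInf_le ⟨_, hlb⟩ hmem, le_csInf ⟨_, hmem⟩ hlb⟩
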